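/- Spectral theorem for L_{k̂}, case Σ_{k̂} ∩ D̄_{|p|} ≠ ∅, absence of residual spectrum: Let p ∈ ℤ²∖{0}, let k̂ ∈ ℤ² be such that k̂ + np ≠ 0 for every n ∈ ℤ, and let Γ ∈ ℂ. Assume there exists n ∈ ℤ with |k̂ + np| ≤ |p| (i.e. the class Σ_{k̂} meets the closed disk D̄_{|p|}). Then the residual spectrum of the bounded operator L_{k̂} on ℓ²(ℤ, ℂ) is empty: for every λ ∈ ℂ, if L_{k̂} − λI is injective then its range is dense in ℓ²(ℤ, ℂ). -/

import Mathlib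

/-- Squared euclidean norm of a lattice point `k ∈ ℤ²`, as a real number. -/
def nsq (k : ℤ × ℤ) : ℝ := ((k.1 ^ 2 + k.2 ^ 2 : ℤ) : ℝ)

/-- The coefficient A(p,q) = (1/2)(|q|⁻² − |p|⁻²)(p₁q₂ − p₂q₁). -/
noncomputable def coeffA (p q : ℤ × ℤ) : ℝ :=
  (1 / 2) * ((nsq q)⁻¹ - (nsq p)⁻¹) * ((p.1 * q.2 - p.2 * q.1 : ℤ) : ℝ)

open scoped ComplexConjugate

lemma Lk_aux_coeffA_neg (p q : ℤ × ℤ) : coeffA (-p) q = - coeffA p q := by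
  unfold coeffA nsq
  simp only [Prod.fst_neg, Prod.snd_neg]
  push_cast
  ring

lemma Lk_aux_coeffA_eq (p khat : ℤ × ℤ) (n : ℤ) :
    coeffA p (khat + n • p)
      = (1/2) * (((((khat + n • p).1 ^ 2 + (khat + n • p).2 ^ 2 : ℤ) : ℝ))⁻¹
          - (((p.1 ^ 2 + p.2 ^ 2 : ℤ) : ℝ))⁻¹) * ((p.1 * khat.2 - p.2 * khat.1 : ℤ) : ℝ) := by
  unfold coeffA nsq
  have h1 : (khat + n • p).1 = khat.1 + n * p.1 := by simp [smul_eq_mul]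
  have h2 : (khat + n • p).2 = khat.2 + n * p.2 := by simp [smul_eq_mul]
  rw [h1, h2]
  push_cast
  ring

lemma Lk_aux_sq_ge_one {k : ℤ × ℤ} (hk : k ≠ 0) : 1 ≤ k.1 ^ 2 + k.2 ^ 2 := by
  have h : k.1 ≠ 0 ∨ k.2 ≠ 0 := by
    rcases Decidable.em (k.1 = 0) with h1 | h1
    · right; intro h2; exact hk (Prod.ext h1 h2)
    · exact Or.inl h1
  rcases h with h | h
  · nlinarith [Int.one_le_abs h, sq_abs k.1, sq_nonneg k.2, abs_nonneg k.1]
  · nlinarith [Int.one_le_abs h, sq_abs k.2, sq_nonneg k.1, abs_nonneg k.2]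

lemma Lk_aux_inv_gap {F P : ℤ} (hF : 1 ≤ F) (hP : 1 ≤ P) (hne : F ≠ P) :
    1/((P:ℝ)*((P:ℝ)+1)) ≤ |((F:ℝ))⁻¹ - ((P:ℝ))⁻¹| := by
  have hx : (1:ℝ) ≤ (F:ℝ) := by exact_mod_cast hF
  have hy : (1:ℝ) ≤ (P:ℝ) := by exact_mod_cast hP
  have hx0 : (0:ℝ) < F := by linarith
  have hy0 : (0:ℝ) < P := by linarith
  rcases lt_or_gt_of_ne hne with h | h
  · have hle : (F:ℝ) ≤ (P:ℝ) - 1 := by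
      have : (F:ℝ) + 1 ≤ P := by exact_mod_cast (by omega : F + 1 ≤ P)
      linarith
    have hnn : (0:ℝ) ≤ (F:ℝ)⁻¹ - (P:ℝ)⁻¹ := by
      have := inv_anti₀ hx0 (by linarith : (F:ℝ) ≤ P)
      linarith
    rw [abs_of_nonneg hnn, inv_eq_one_div, inv_eq_one_div,
      div_sub_div _ _ (ne_of_gt hx0) (ne_of_gt hy0),
      div_le_div_iff₀ (by positivity) (by positivity)]
    nlinarith [mul_nonneg (mul_nonneg hy0.le hy0.le) (by linarith : (0:ℝ) ≤ (P:ℝ) - 1 - F)]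
  · have hle : (P:ℝ) + 1 ≤ (F:ℝ) := by exact_mod_cast (by omega : P + 1 ≤ F)
    have hnn : (F:ℝ)⁻¹ - (P:ℝ)⁻¹ ≤ 0 := by
      have := inv_anti₀ hy0 (by linarith : (P:ℝ) ≤ F)
      linarith
    rw [abs_of_nonpos hnn, neg_sub, inv_eq_one_div, inv_eq_one_div,
      div_sub_div _ _ (ne_of_gt hy0) (ne_of_gt hx0),
      div_le_div_iff₀ (by positivity) (by positivity)]
    nlinarith [mul_nonneg hy0.le (by linarith : (0:ℝ) ≤ (F:ℝ) - (P + 1))]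

set_option maxHeartbeats 1000000 in
/-- Spectral theorem for L_{k̂} in the case Σ_{k̂} ∩ D̄_{|p|} ≠ ∅ (some
|k̂ + np| ≤ |p|): the residual spectrum of L_{k̂} on ℓ²(ℤ,ℂ) is empty, i.e. for
every λ, if L_{k̂} − λI is injective then its range is dense. -/
theorem Lk_no_residual_spectrum
    (p : ℤ × ℤ) (hp : p ≠ 0) (khat : ℤ × ℤ)
    (hk : ∀ n : ℤ, khat + n • p ≠ 0)
    (hmeet : ∃ n : ℤ, nsq (khat + n • p) ≤ nsq p) (Γ : ℂ)
    (T : lp (fun _ : ℤ => ℂ) 2 →L[ℂ] lp (fun _ : ℤ => ℂ) 2)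
    (hT : ∀ (ω : lp (fun _ : ℤ => ℂ) 2) (n : ℤ),
      (T ω) n =
        Γ * (coeffA p (khat + (n - 1) • p) : ℂ) * ω (n - 1)
        + (starRingEnd ℂ) Γ * (coeffA (-p) (khat + (n + 1) • p) : ℂ) * ω (n + 1)) :
    ∀ lam : ℂ,
      Function.Injective
        ⇑(T - lam • (1 : lp (fun _ : ℤ => ℂ) 2 →L[ℂ] lp (fun _ : ℤ => ℂ) 2)) →
      DenseRange
        ⇑(T - lam • (1 : lp (fun _ : ℤ => ℂ) 2 →L[ℂ] lp (fun _ : ℤ => ℂ) 2)) := by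
  classical
  intro lam hinj
  set A := T - lam • (1 : lp (fun _ : ℤ => ℂ) 2 →L[ℂ] lp (fun _ : ℤ => ℂ) 2) with hA
  -- reduction to triviality of the orthogonal complement of the range
  suffices hsuff : ∀ ψ : lp (fun _ : ℤ => ℂ) 2,
      (∀ x, inner (𝕜 := ℂ) (A x) ψ = 0) → ψ = 0 by
    have hdense : Dense ((LinearMap.range (A : lp (fun _ : ℤ => ℂ) 2 →ₗ[ℂ] lp (fun _ : ℤ => ℂ) 2) : Submodule ℂ (lp (fun _ : ℤ => ℂ) 2)) :
        Set (lp (fun _ : ℤ => ℂ) 2)) := by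
      rw [Submodule.dense_iff_topologicalClosure_eq_top,
        Submodule.topologicalClosure_eq_top_iff, Submodule.eq_bot_iff]
      intro ψ hψ
      exact hsuff ψ fun x => hψ (A x) ⟨x, rfl⟩
    simpa [DenseRange, LinearMap.coe_range] using hdense
  intro ψ horth
  set c : ℤ → ℝ := fun n => coeffA p (khat + n • p) with hc
  have hTapp : ∀ (ω : lp (fun _ : ℤ => ℂ) 2) (n : ℤ),
      (T ω) n = Γ * (c (n-1) : ℂ) * ω (n - 1) - conj Γ * (c (n+1) : ℂ) * ω (n + 1) := by
    intro ω n
    rw [hT ω n, Lk_aux_coeffA_neg]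
    push_cast
    ring
  -- the recursion satisfied by any ψ orthogonal to the range of A
  have hrec : ∀ k : ℤ, conj Γ * ((c k : ℝ) : ℂ) * ψ (k+1)
      - Γ * ((c k : ℝ) : ℂ) * ψ (k-1) - conj lam * ψ k = 0 := by
    have hTsingle : ∀ k : ℤ, T (lp.single 2 k 1) =
        lp.single 2 (k+1) (Γ * (c k : ℂ)) + lp.single 2 (k-1) (-(conj Γ * (c k : ℂ))) := by
      intro k
      refine lp.ext (funext fun n => ?_)
      rw [lp.coeFn_add, Pi.add_apply, hTapp]
      by_cases h1 : n = k + 1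
      · subst h1
        have a1 : (lp.single 2 (k+1) (Γ * (c k : ℂ)) : lp (fun _ : ℤ => ℂ) 2) (k+1)
            = Γ * (c k : ℂ) := lp.single_apply_self _ _ _
        have a2 : (lp.single 2 (k-1) (-(conj Γ * (c k : ℂ))) : lp (fun _ : ℤ => ℂ) 2) (k+1)
            = 0 := lp.single_apply_ne _ _ _ (by omega)
        have a3 : (lp.single 2 k (1:ℂ) : lp (fun _ : ℤ => ℂ) 2) (k+1-1) = 1 := by
          rw [show k+1-1 = k by ring]; exact lp.single_apply_self _ _ _
        have a4 : (lp.single 2 k (1:ℂ) : lp (fun _ : ℤ => ℂ) 2) (k+1+1) = 0 :=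
          lp.single_apply_ne _ _ _ (by omega)
        rw [a1, a2, a3, a4, show k+1-1 = k by ring]
        ring
      · by_cases h2 : n = k - 1
        · subst h2
          have a1 : (lp.single 2 (k+1) (Γ * (c k : ℂ)) : lp (fun _ : ℤ => ℂ) 2) (k-1)
              = 0 := lp.single_apply_ne _ _ _ (by omega)
          have a2 : (lp.single 2 (k-1) (-(conj Γ * (c k : ℂ))) : lp (fun _ : ℤ => ℂ) 2) (k-1)
              = -(conj Γ * (c k : ℂ)) := lp.single_apply_self _ _ _
          have a3 : (lp.single 2 k (1:ℂ) : lp (fun _ : ℤ => ℂ) 2) (k-1-1) = 0 :=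
            lp.single_apply_ne _ _ _ (by omega)
          have a4 : (lp.single 2 k (1:ℂ) : lp (fun _ : ℤ => ℂ) 2) (k-1+1) = 1 := by
            rw [show k-1+1 = k by ring]; exact lp.single_apply_self _ _ _
          rw [a1, a2, a3, a4, show k-1+1 = k by ring]
          ring
        · have a1 : (lp.single 2 (k+1) (Γ * (c k : ℂ)) : lp (fun _ : ℤ => ℂ) 2) n
              = 0 := lp.single_apply_ne _ _ _ h1
          have a2 : (lp.single 2 (k-1) (-(conj Γ * (c k : ℂ))) : lp (fun _ : ℤ => ℂ) 2) n
              = 0 := lp.single_apply_ne _ _ _ h2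
          have a3 : (lp.single 2 k (1:ℂ) : lp (fun _ : ℤ => ℂ) 2) (n-1) = 0 :=
            lp.single_apply_ne _ _ _ (by omega)
          have a4 : (lp.single 2 k (1:ℂ) : lp (fun _ : ℤ => ℂ) 2) (n+1) = 0 :=
            lp.single_apply_ne _ _ _ (by omega)
          rw [a1, a2, a3, a4]
          ring
    intro k
    have h0 := horth (lp.single 2 k 1)
    rw [hA, ContinuousLinearMap.sub_apply, ContinuousLinearMap.smul_apply,
      ContinuousLinearMap.one_apply, inner_sub_left, inner_smul_left, hTsingle k,
      inner_add_left, lp.inner_single_left, lp.inner_single_left, lp.inner_single_left,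
      RCLike.inner_apply, RCLike.inner_apply, RCLike.inner_apply] at h0
    simp only [map_mul, map_neg, Complex.conj_conj, Complex.conj_ofReal, map_one] at h0
    rw [← h0]
    push_cast
    ring
  -- injectivity forces lam ≠ 0 whenever some column of T vanishes
  have hlamne : ∀ m : ℤ, Γ * ((c m : ℝ) : ℂ) = 0 → lam ≠ 0 := by
    intro m hm hlam0
    have hconj : conj Γ * ((c m : ℝ) : ℂ) = 0 := by
      have := congrArg conj hm
      simpa [Complex.conj_ofReal] using this
    have hTs : T (lp.single 2 m 1) = 0 := by
      refine lp.ext (funext fun n => ?_)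
      rw [hTapp, lp.coeFn_zero, Pi.zero_apply]
      by_cases h1 : n = m + 1
      · subst h1
        have a3 : (lp.single 2 m (1:ℂ) : lp (fun _ : ℤ => ℂ) 2) (m+1-1) = 1 := by
          rw [show m+1-1 = m by ring]; exact lp.single_apply_self _ _ _
        have a4 : (lp.single 2 m (1:ℂ) : lp (fun _ : ℤ => ℂ) 2) (m+1+1) = 0 :=
          lp.single_apply_ne _ _ _ (by omega)
        rw [a3, a4, show m+1-1 = m by ring]
        linear_combination hm
      · by_cases h2 : n = m - 1
        · subst h2
          have a3 : (lp.single 2 m (1:ℂ) : lp (fun _ : ℤ => ℂ) 2) (m-1-1) = 0 :=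
            lp.single_apply_ne _ _ _ (by omega)
          have a4 : (lp.single 2 m (1:ℂ) : lp (fun _ : ℤ => ℂ) 2) (m-1+1) = 1 := by
            rw [show m-1+1 = m by ring]; exact lp.single_apply_self _ _ _
          rw [a3, a4, show m-1+1 = m by ring]
          linear_combination -hconj
        · have a3 : (lp.single 2 m (1:ℂ) : lp (fun _ : ℤ => ℂ) 2) (n-1) = 0 :=
            lp.single_apply_ne _ _ _ (by omega)
          have a4 : (lp.single 2 m (1:ℂ) : lp (fun _ : ℤ => ℂ) 2) (n+1) = 0 :=
            lp.single_apply_ne _ _ _ (by omega)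
          rw [a3, a4]
          ring
    have hAz : A (lp.single 2 m 1) = 0 := by
      rw [hA, ContinuousLinearMap.sub_apply, ContinuousLinearMap.smul_apply,
        ContinuousLinearMap.one_apply, hTs, hlam0]
      simp
    have h0 : (lp.single 2 m (1:ℂ) : lp (fun _ : ℤ => ℂ) 2) = 0 :=
      hinj (by rw [show ⇑A = ⇑(T - lam • 1) from rfl] at hAz ⊢; rw [hAz, map_zero])
    have h1 : (lp.single 2 m (1:ℂ) : lp (fun _ : ℤ => ℂ) 2) m = 0 := by
      rw [h0, lp.coeFn_zero, Pi.zero_apply]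
    rw [lp.single_apply_self] at h1
    exact one_ne_zero h1
  -- ψ vanishes wherever a column of T vanishes
  have hψZ : ∀ m : ℤ, Γ * ((c m : ℝ) : ℂ) = 0 → ψ m = 0 := by
    intro m hm
    have hconj : conj Γ * ((c m : ℝ) : ℂ) = 0 := by
      have := congrArg conj hm
      simpa [Complex.conj_ofReal] using this
    have h := hrec m
    have h2 : conj lam * ψ m = 0 := by
      linear_combination ψ (m+1) * hconj - ψ (m-1) * hm - h
    have hlamc : conj lam ≠ 0 := by
      simpa using hlamne m hm
    exact (mul_eq_zero.mp h2).resolve_left hlamc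
  by_cases htriv : ∀ m : ℤ, Γ * ((c m : ℝ) : ℂ) = 0
  · exact lp.ext (funext fun n => by rw [hψZ n (htriv n), lp.coeFn_zero, Pi.zero_apply])
  push_neg at htriv
  obtain ⟨m₀, hm₀⟩ := htriv
  have hΓ : Γ ≠ 0 := fun h => hm₀ (by rw [h, zero_mul])
  have hcm₀ : c m₀ ≠ 0 := by
    intro h
    exact hm₀ (by rw [h]; simp)
  -- integer quantities
  set D : ℤ := p.1 * khat.2 - p.2 * khat.1 with hD
  set P : ℤ := p.1 ^ 2 + p.2 ^ 2 with hP
  set F : ℤ → ℤ := fun n => (khat + n • p).1 ^ 2 + (khat + n • p).2 ^ 2 with hF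
  have hcform : ∀ n : ℤ, c n = (1/2) * (((F n : ℝ))⁻¹ - ((P : ℝ))⁻¹) * ((D : ℝ)) := by
    intro n
    have := Lk_aux_coeffA_eq p khat n
    simpa [hc, hD, hP, hF] using this
  have hP1 : 1 ≤ P := Lk_aux_sq_ge_one hp
  have hF1 : ∀ n, 1 ≤ F n := fun n => Lk_aux_sq_ge_one (hk n)
  have hD0 : (D : ℝ) ≠ 0 := by
    intro h
    exact hcm₀ (by rw [hcform m₀, h, mul_zero])
  have hPposR : (0:ℝ) < (P:ℝ) := by exact_mod_cast lt_of_lt_of_le zero_lt_one hP1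
  have hPP : (0:ℝ) < (P:ℝ) * ((P:ℝ)+1) := by nlinarith
  set δ : ℝ := (1/2) * (1/((P:ℝ)*((P:ℝ)+1))) * |(D:ℝ)| with hδ
  have hδpos : 0 < δ := by
    exact mul_pos (mul_pos (by norm_num : (0:ℝ) < 1/2) (div_pos one_pos hPP)) (abs_pos.mpr hD0)
  have hlb : ∀ n : ℤ, c n ≠ 0 → δ ≤ |c n| := by
    intro n hn
    have hFP : F n ≠ P := by
      intro he
      exact hn (by rw [hcform n, he, sub_self, mul_zero, zero_mul])
    have hgap := Lk_aux_inv_gap (hF1 n) hP1 hFP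
    have habs : |c n| = (1/2) * |((F n : ℝ))⁻¹ - ((P : ℝ))⁻¹| * |(D:ℝ)| := by
      rw [hcform n, abs_mul, abs_mul, abs_of_nonneg (by norm_num : (0:ℝ) ≤ (1/2:ℝ))]
    rw [habs, hδ]
    have hDnn : (0:ℝ) ≤ |(D:ℝ)| := abs_nonneg _
    nlinarith [mul_nonneg (sub_nonneg.mpr hgap) hDnn]
  -- the conjugating phase
  have hΓc : conj Γ ≠ 0 := by simpa using hΓ
  set s : ℂ := -(Γ / conj Γ) with hs
  have hs0 : s ≠ 0 := by
    rw [hs]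
    simp only [ne_eq, neg_eq_zero, div_eq_zero_iff, not_or]
    exact ⟨hΓ, hΓc⟩
  have hΓs : conj Γ * s = -Γ := by
    rw [hs]; field_simp
  have hΓinv : Γ * s⁻¹ = -(conj Γ) := by
    rw [mul_inv_eq_iff_eq_mul₀ hs0]
    linear_combination hΓs
  have hsnorm : ‖s‖ = 1 := by
    rw [hs, norm_neg, norm_div, RCLike.norm_conj, div_self]
    simpa using hΓ
  -- the candidate eigenvector
  set g : ℤ → ℂ := fun n => s ^ n * conj (ψ n) with hg
  set φ : ℤ → ℂ := fun n =>
    if c n = 0 then lam⁻¹ * (Γ * g (n-1) - conj Γ * g (n+1)) else g n * ((c n : ℝ) : ℂ)⁻¹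
    with hφ
  have hgnorm : ∀ n : ℤ, ‖g n‖ = ‖ψ n‖ := by
    intro n
    rw [hg]
    simp only [norm_mul, norm_zpow, hsnorm, one_zpow, one_mul, RCLike.norm_conj]
  set C : ℝ := ‖lam⁻¹‖ * ‖Γ‖ + δ⁻¹ with hC
  have hC0 : 0 ≤ C := add_nonneg (mul_nonneg (norm_nonneg _) (norm_nonneg _)) (inv_nonneg.mpr hδpos.le)
  have hbd : ∀ n : ℤ, ‖φ n‖ ≤ C * (‖ψ (n-1)‖ + ‖ψ n‖ + ‖ψ (n+1)‖) := by
    intro n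
    have h1 : (0:ℝ) ≤ ‖ψ (n-1)‖ := norm_nonneg _
    have h2 : (0:ℝ) ≤ ‖ψ n‖ := norm_nonneg _
    have h3 : (0:ℝ) ≤ ‖ψ (n+1)‖ := norm_nonneg _
    have hδinv : (0:ℝ) ≤ δ⁻¹ := le_of_lt (inv_pos.mpr hδpos)
    by_cases hcn : c n = 0
    · have : φ n = lam⁻¹ * (Γ * g (n-1) - conj Γ * g (n+1)) := by rw [hφ]; simp [hcn]
      rw [this]
      have hb1 : ‖lam⁻¹ * (Γ * g (n-1) - conj Γ * g (n+1))‖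
          ≤ ‖lam⁻¹‖ * (‖Γ‖ * ‖ψ (n-1)‖ + ‖Γ‖ * ‖ψ (n+1)‖) := by
        rw [norm_mul]
        apply mul_le_mul_of_nonneg_left _ (norm_nonneg _)
        calc ‖Γ * g (n-1) - conj Γ * g (n+1)‖
            ≤ ‖Γ * g (n-1)‖ + ‖conj Γ * g (n+1)‖ := norm_sub_le _ _
          _ = ‖Γ‖ * ‖ψ (n-1)‖ + ‖Γ‖ * ‖ψ (n+1)‖ := by
              simp only [norm_mul, RCLike.norm_conj, hgnorm]
      refine le_trans hb1 ?_
      rw [hC]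
      nlinarith [norm_nonneg lam⁻¹, norm_nonneg Γ, mul_nonneg (norm_nonneg lam⁻¹) (norm_nonneg Γ)]
    · have : φ n = g n * ((c n : ℝ) : ℂ)⁻¹ := by rw [hφ]; simp [hcn]
      rw [this, norm_mul, norm_inv, Complex.norm_real, hgnorm]
      have hinv : |c n|⁻¹ ≤ δ⁻¹ := inv_anti₀ hδpos (hlb n hcn)
      have : ‖ψ n‖ * |c n|⁻¹ ≤ ‖ψ n‖ * δ⁻¹ := mul_le_mul_of_nonneg_left hinv h2
      refine le_trans this ?_
      rw [hC]
      nlinarith [mul_nonneg (norm_nonneg lam⁻¹) (norm_nonneg Γ)]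
  -- square-summability of φ
  have htwo : ((2:ENNReal)).toReal = ((2:ℕ):ℝ) := by norm_num
  have hsum0 : Summable (fun n : ℤ => ‖ψ n‖ ^ 2) := by
    have := lp.memℓp ψ
    rw [memℓp_gen_iff (by norm_num)] at this
    have heq : (fun n : ℤ => ‖ψ n‖ ^ ((2:ENNReal)).toReal) = fun n : ℤ => ‖ψ n‖ ^ 2 := by
      funext n; rw [htwo, Real.rpow_natCast]
    rwa [heq] at this
  have hsumP : Summable (fun n : ℤ => ‖ψ (n+1)‖ ^ 2) := by
    have := (Equiv.addRight (1:ℤ)).summable_iff.mpr hsum0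
    simpa [Function.comp_def] using this
  have hsumM : Summable (fun n : ℤ => ‖ψ (n-1)‖ ^ 2) := by
    have := (Equiv.addRight (-1:ℤ)).summable_iff.mpr hsum0
    simpa [Function.comp_def, sub_eq_add_neg] using this
  have hmem : Memℓp φ 2 := by
    apply memℓp_gen
    have heq : (fun n : ℤ => ‖φ n‖ ^ ((2:ENNReal)).toReal) = fun n : ℤ => ‖φ n‖ ^ 2 := by
      funext n; rw [htwo, Real.rpow_natCast]
    rw [heq]
    have hmaj : Summable (fun n : ℤ =>
        C ^ 2 * 3 * (‖ψ (n-1)‖ ^ 2 + ‖ψ n‖ ^ 2 + ‖ψ (n+1)‖ ^ 2)) :=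
      ((hsumM.add hsum0).add hsumP).mul_left _
    apply Summable.of_nonneg_of_le (fun n => by positivity) _ hmaj
    intro n
    have hb := hbd n
    have h1 : (0:ℝ) ≤ ‖ψ (n-1)‖ := norm_nonneg _
    have h2 : (0:ℝ) ≤ ‖ψ n‖ := norm_nonneg _
    have h3 : (0:ℝ) ≤ ‖ψ (n+1)‖ := norm_nonneg _
    have hsq : ‖φ n‖ ^ 2 ≤ (C * (‖ψ (n-1)‖ + ‖ψ n‖ + ‖ψ (n+1)‖)) ^ 2 :=
      pow_le_pow_left₀ (norm_nonneg _) hb 2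
    refine le_trans hsq ?_
    nlinarith [mul_nonneg (mul_nonneg hC0 hC0) (sq_nonneg (‖ψ (n-1)‖ - ‖ψ n‖)),
      mul_nonneg (mul_nonneg hC0 hC0) (sq_nonneg (‖ψ (n-1)‖ - ‖ψ (n+1)‖)),
      mul_nonneg (mul_nonneg hC0 hC0) (sq_nonneg (‖ψ n‖ - ‖ψ (n+1)‖))]
  set Φ : lp (fun _ : ℤ => ℂ) 2 := ⟨φ, hmem⟩ with hΦ
  have hΦapp : ∀ n : ℤ, Φ n = φ n := fun n => rfl
  -- ψ vanishes where c vanishes, so c·φ = g everywhere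
  have hKey : ∀ n : ℤ, ((c n : ℝ) : ℂ) * φ n = g n := by
    intro n
    by_cases hcn : c n = 0
    · have hψn : ψ n = 0 := hψZ n (by rw [hcn]; simp)
      rw [hcn, hg]
      simp [hψn]
    · have : φ n = g n * ((c n : ℝ) : ℂ)⁻¹ := by rw [hφ]; simp [hcn]
      rw [this]
      have hcc : ((c n : ℝ) : ℂ) ≠ 0 := by simpa using hcn
      field_simp
  -- conjugated recursion
  have hrecc : ∀ n : ℤ, Γ * ((c n : ℝ) : ℂ) * conj (ψ (n+1))
      - conj Γ * ((c n : ℝ) : ℂ) * conj (ψ (n-1)) - lam * conj (ψ n) = 0 := by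
    intro n
    have h := congrArg conj (hrec n)
    simpa [map_sub, map_mul, Complex.conj_conj, Complex.conj_ofReal] using h
  -- A Φ = 0
  have hAΦ : A Φ = 0 := by
    rw [hA]
    refine lp.ext (funext fun n => ?_)
    rw [ContinuousLinearMap.sub_apply, ContinuousLinearMap.smul_apply,
      ContinuousLinearMap.one_apply, lp.coeFn_sub, Pi.sub_apply, lp.coeFn_smul,
      Pi.smul_apply, smul_eq_mul, lp.coeFn_zero, Pi.zero_apply, hTapp,
      hΦapp, hΦapp, hΦapp]
    have e1 : Γ * ((c (n-1) : ℝ) : ℂ) * φ (n-1) = Γ * g (n-1) := by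
      rw [mul_assoc, hKey]
    have e2 : conj Γ * ((c (n+1) : ℝ) : ℂ) * φ (n+1) = conj Γ * g (n+1) := by
      rw [mul_assoc, hKey]
    rw [e1, e2]
    by_cases hcn : c n = 0
    · have hφn : φ n = lam⁻¹ * (Γ * g (n-1) - conj Γ * g (n+1)) := by rw [hφ]; simp [hcn]
      have hlamn : lam ≠ 0 := hlamne n (by rw [hcn]; simp)
      have hcancel : lam * (lam⁻¹ * (Γ * g (n-1) - conj Γ * g (n+1)))
          = Γ * g (n-1) - conj Γ * g (n+1) := by
        rw [← mul_assoc, mul_inv_cancel₀ hlamn, one_mul]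
      rw [hφn, hcancel]
      ring
    · have hφn : φ n = g n * ((c n : ℝ) : ℂ)⁻¹ := by rw [hφ]; simp [hcn]
      have hcc : ((c n : ℝ) : ℂ) ≠ 0 := by simpa using hcn
      have hgm : g (n-1) = s ^ n * s⁻¹ * conj (ψ (n-1)) := by
        rw [hg]
        simp only []
        rw [show n - 1 = n + (-1) by ring, zpow_add₀ hs0, zpow_neg_one]
      have hgp : g (n+1) = s ^ n * s * conj (ψ (n+1)) := by
        rw [hg]
        simp only []
        rw [zpow_add_one₀ hs0]
      have hgn : g n = s ^ n * conj (ψ n) := rfl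
      rw [hφn, hgm, hgp, hgn]
      have hcc1 : ((c n : ℝ) : ℂ) * ((c n : ℝ) : ℂ)⁻¹ = 1 := mul_inv_cancel₀ hcc
      have e3 : Γ * conj (ψ (n+1)) - conj Γ * conj (ψ (n-1))
          = lam * conj (ψ n) * ((c n : ℝ) : ℂ)⁻¹ := by
        have h := hrecc n
        apply mul_right_cancel₀ hcc
        rw [mul_assoc, inv_mul_cancel₀ hcc, mul_one]
        linear_combination h
      linear_combination (s ^ n * conj (ψ (n-1))) * hΓinv
        - (s ^ n * conj (ψ (n+1))) * hΓs + s ^ n * e3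
  -- conclude
  have hΦ0 : Φ = 0 := hinj (by rw [show ⇑A = ⇑(T - lam • 1) from rfl] at hAΦ ⊢; rw [hAΦ, map_zero])
  refine lp.ext (funext fun n => ?_)
  rw [lp.coeFn_zero, Pi.zero_apply]
  by_cases hcn : c n = 0
  · exact hψZ n (by rw [hcn]; simp)
  · have hφn0 : φ n = 0 := by
      have := congrArg (fun (x : lp (fun _ : ℤ => ℂ) 2) => x n) hΦ0
      simpa [hΦapp] using this
    have hφn : φ n = g n * ((c n : ℝ) : ℂ)⁻¹ := by rw [hφ]; simp [hcn]
    have hcc : ((c n : ℝ) : ℂ) ≠ 0 := by simpa using hcn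
    have hg0 : g n = 0 := by
      have := hφn0
      rw [hφn, mul_eq_zero] at this
      rcases this with h | h
      · exact h
      · exact absurd h (by simpa using hcc)
    have : conj (ψ n) = 0 := by
      rw [hg] at hg0
      simp only [mul_eq_zero] at hg0
      rcases hg0 with h | h
      · exact absurd h (zpow_ne_zero n hs0)
      · exact h
    simpa using this
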